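/- Let (H,w) be a k-uniform hypergraph with k ≥ 3 equipped with a weighting function w : V(H) ∪ E(H) → ℂ, and let e be an edge of H containing at least two vertices of degree one. If λ is an eigenvalue of the adjacency tensor A(H∖e, w), then λ is an eigenvalue of the adjacency tensor A(H,w). -/

import Mathlib

/-!
Weighted uniform hypergraphs, their adjacency tensors, eigenvalues,
matchings and matching polynomials, following Wan–Wang–Hu,
"Spectra of weighted uniform hypertrees".
-/

open Finset

open scoped Classical

/-- A hypergraph on a vertex type `V`: a finite vertex set together with a
finite set of edges (each edge being a finite set of vertices). -/
structure WHypergraph (V : Type*) where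
  verts : Finset V
  edges : Finset (Finset V)

namespace WHypergraph

variable {V : Type*} [Fintype V] [DecidableEq V]

/-- `H` is a `k`-uniform hypergraph: every edge is a `k`-element subset of the
vertex set. -/
def IsUniform (H : WHypergraph V) (k : ℕ) : Prop :=
  (∀ e ∈ H.edges, e ⊆ H.verts) ∧ ∀ e ∈ H.edges, e.card = k

/-- Two vertices lie in a common edge (one step of a walk). -/
def Adj (H : WHypergraph V) (a b : V) : Prop :=
  ∃ e ∈ H.edges, a ∈ e ∧ b ∈ e

/-- Every two vertices of `H` are joined by a walk. -/
def Connected (H : WHypergraph V) : Prop :=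
  ∀ u ∈ H.verts, ∀ v ∈ H.verts, Relation.ReflTransGen H.Adj u v

/-- The data `v_0, e_1, v_1, …, e_ℓ, v_ℓ (= v_0)` (re-indexed from `0`, with
`v (i) , v (i+1 mod ℓ) ∈ e i`) form a cycle of `H`: a closed walk with no
repeated vertices and no repeated edges. -/
def IsCycleIn (H : WHypergraph V) (ℓ : ℕ) (v : ℕ → V) (e : ℕ → Finset V) : Prop :=
  2 ≤ ℓ ∧
  (∀ i < ℓ, ∀ j < ℓ, v i = v j → i = j) ∧
  (∀ i < ℓ, ∀ j < ℓ, e i = e j → i = j) ∧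
  (∀ i < ℓ, e i ∈ H.edges) ∧
  (∀ i < ℓ, v i ∈ e i ∧ v ((i + 1) % ℓ) ∈ e i)

/-- `H` contains a cycle. -/
def HasCycle (H : WHypergraph V) : Prop := ∃ ℓ v e, H.IsCycleIn ℓ v e

/-- A `k`-uniform hypertree: a connected acyclic `k`-uniform hypergraph. -/
def IsHypertree (H : WHypergraph V) (k : ℕ) : Prop :=
  H.verts.Nonempty ∧ H.IsUniform k ∧ H.Connected ∧ ¬H.HasCycle

/-- The degree of a vertex: the number of edges containing it. -/
def degree (H : WHypergraph V) (v : V) : ℕ :=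
  (H.edges.filter fun e => v ∈ e).card

/-- The subgraph induced by a vertex subset `U`. -/
def induce (H : WHypergraph V) (U : Finset V) : WHypergraph V :=
  ⟨U, H.edges.filter fun e => e ⊆ U⟩

/-- `T'` is a subtree of `T`: an induced subgraph of `T` which is itself a
`k`-uniform hypertree. -/
def IsSubtree (T T' : WHypergraph V) (k : ℕ) : Prop :=
  (∃ U : Finset V, U ⊆ T.verts ∧ T' = T.induce U) ∧ T'.IsHypertree k

/-- Delete the edge `e` from `H` together with the resulting isolated
vertices (the vertices of `e` that lie in no other edge). -/
def delEdge (H : WHypergraph V) (e : Finset V) : WHypergraph V :=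
  ⟨H.verts \ e.filter (fun v => H.degree v = 1), H.edges.erase e⟩

/-- A pendant edge of a `k`-uniform hypergraph: an edge containing exactly
`k - 1` vertices of degree one. -/
def IsPendant (H : WHypergraph V) (k : ℕ) (e : Finset V) : Prop :=
  e ∈ H.edges ∧ (e.filter fun v => H.degree v = 1).card = k - 1

/-- The entry `a_{t 0, t 1, …, t m}` of the adjacency tensor (of order `m + 1`)
of the weighted hypergraph `(H, w)`, where `wv` is the weighting on vertices and
`we` the weighting on edges: it equals `w(v)` on the diagonal entry of a vertex
`v`, `w(e)/(k-1)!` if the indices enumerate an edge `e` (here `k = m + 1`), and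
`0` otherwise. -/
noncomputable def adjEntry (H : WHypergraph V) (wv : V → ℂ) (we : Finset V → ℂ)
    {m : ℕ} (t : Fin (m + 1) → V) : ℂ :=
  if (∀ i, t i = t 0) ∧ t 0 ∈ H.verts then wv (t 0)
  else if Function.Injective t ∧ Finset.univ.image t ∈ H.edges then
    we (Finset.univ.image t) / (Nat.factorial m : ℂ)
  else 0

/-- `(lam, x)` is an eigenpair of the adjacency tensor (of order `k`) of
`(H, w)`: `x` is nonzero (as a vector indexed by the vertices) and for every
vertex `v`, `∑_{i_2,…,i_k} a_{v i_2 … i_k} x_{i_2} ⋯ x_{i_k} = lam * x_v^(k-1)`. -/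
def IsEigenpair (H : WHypergraph V) (wv : V → ℂ) (we : Finset V → ℂ) (k : ℕ)
    (lam : ℂ) (x : V → ℂ) : Prop :=
  (∃ v ∈ H.verts, x v ≠ 0) ∧
  ∀ v ∈ H.verts,
    ∑ t : Fin (k - 1) → V, H.adjEntry wv we (Fin.cons v t) * ∏ i, x (t i)
      = lam * x v ^ (k - 1)

/-- `lam` is an eigenvalue of the adjacency tensor of `(H, w)`. -/
def IsEigenvalue (H : WHypergraph V) (wv : V → ℂ) (we : Finset V → ℂ) (k : ℕ)
    (lam : ℂ) : Prop :=
  ∃ x : V → ℂ, H.IsEigenpair wv we k lam x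

/-- The spectral radius of the adjacency tensor of `(H, w)`: the largest
modulus of its eigenvalues. -/
noncomputable def spectralRadius (H : WHypergraph V) (wv : V → ℂ) (we : Finset V → ℂ)
    (k : ℕ) : ℝ :=
  sSup ((fun z : ℂ => ‖z‖) '' {lam | H.IsEigenvalue wv we k lam})

/-- The set of matchings of `H`: sets of pairwise vertex-disjoint edges
(including the empty matching). -/
noncomputable def matchings (H : WHypergraph V) : Finset (Finset (Finset V)) :=
  H.edges.powerset.filter fun M => ∀ e ∈ M, ∀ f ∈ M, e ≠ f → Disjoint e f

/-- `V(M)`: the set of vertices covered by the matching `M`. -/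
def mVerts (M : Finset (Finset V)) : Finset V := M.biUnion id

/-- The weighted matching polynomial
`μ(H,w,x) = ∑_{M ∈ M(H)} (−1)^{|M|} ∏_{e ∈ M} w(e)^k ∏_{v ∈ V(H)∖V(M)} (x − w(v))`,
evaluated at `x`. -/
noncomputable def matchPoly (H : WHypergraph V) (wv : V → ℂ) (we : Finset V → ℂ)
    (k : ℕ) (x : ℂ) : ℂ :=
  ∑ M ∈ H.matchings,
    (-1 : ℂ) ^ M.card * (∏ e ∈ M, we e ^ k) * ∏ v ∈ H.verts \ mVerts M, (x - wv v)

/-- The matching number: the maximum size of a matching of `H`. -/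
noncomputable def matchingNumber (H : WHypergraph V) : ℕ := H.matchings.sup Finset.card

/-- The polynomial `φ(H,x) = ∑_{i ≥ 0} (−1)^i p(H,i) x^{(m(H)−i)k}` where
`p(H,i)` is the number of `i`-matchings, written as a sum over all matchings,
evaluated at `x`. -/
noncomputable def phiPoly (H : WHypergraph V) (k : ℕ) (x : ℂ) : ℂ :=
  ∑ M ∈ H.matchings, (-1 : ℂ) ^ M.card * x ^ ((H.matchingNumber - M.card) * k)

/-- `B` is a weighted vertex-edge incidence matrix of `H`: rows indexed by
vertices, columns by edges, with `B(v,e) ≠ 0` iff `v ∈ e`. -/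
def IsWIM (H : WHypergraph V) (B : V → Finset V → ℂ) : Prop :=
  ∀ v ∈ H.verts, ∀ e ∈ H.edges, (B v e ≠ 0 ↔ v ∈ e)

/-- `(H, w)` is `{λ_e}`-normal with respect to the weighted incidence matrix `B`:
(C1) `∑_{e ∋ v} B(v,e) = 1` for every vertex `v`, and
(C2) `∏_{u ∈ e} B(u,e) = ∏_{u ∈ e} w(e)/(λ_e − w(u))` for every edge `e`. -/
def IsFamilyNormalWith (H : WHypergraph V) (wv : V → ℂ) (we : Finset V → ℂ)
    (lam : Finset V → ℂ) (B : V → Finset V → ℂ) : Prop :=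
  H.IsWIM B ∧
  (∀ v ∈ H.verts, ∑ e ∈ H.edges.filter (fun e => v ∈ e), B v e = 1) ∧
  (∀ e ∈ H.edges, ∏ u ∈ e, B u e = ∏ u ∈ e, we e / (lam e - wv u))

/-- `(H, w)` is `{λ_e}`-normal (with respect to some weighted incidence matrix). -/
def IsFamilyNormal (H : WHypergraph V) (wv : V → ℂ) (we : Finset V → ℂ)
    (lam : Finset V → ℂ) : Prop :=
  ∃ B : V → Finset V → ℂ, H.IsFamilyNormalWith wv we lam B

/-- `(H, w)` is consistently `λ`-normal: it is `λ`-normal with respect to some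
weighted incidence matrix `B` which moreover satisfies (C3): for every cycle
`v_0, e_1, v_1, …, e_ℓ, v_ℓ (= v_0)`,
`∏_{i=1}^{ℓ} [B(v_i,e_i)(λ − w(v_i))]/[B(v_{i−1},e_i)(λ − w(v_{i−1}))] = 1`. -/
def IsConsistentlyNormal (H : WHypergraph V) (wv : V → ℂ) (we : Finset V → ℂ)
    (lam : ℂ) : Prop :=
  ∃ B : V → Finset V → ℂ, H.IsFamilyNormalWith wv we (fun _ => lam) B ∧
    ∀ ℓ v e, H.IsCycleIn ℓ v e →
      ∏ i ∈ Finset.range ℓ,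
        (B (v ((i + 1) % ℓ)) (e i) * (lam - wv (v ((i + 1) % ℓ)))) /
          (B (v i) (e i) * (lam - wv (v i))) = 1

/-- An arc of the digraph `D(A)` associated with the adjacency tensor (of order
`k`) of `(H,w)`: there is a nonzero entry `a_{p i_2 … i_k}` with some `i_j = q`. -/
def TensorArc (H : WHypergraph V) (wv : V → ℂ) (we : Finset V → ℂ) (k : ℕ)
    (p q : V) : Prop :=
  ∃ t : Fin (k - 1) → V, H.adjEntry wv we (Fin.cons p t) ≠ 0 ∧ ∃ j, t j = q

/-- The adjacency tensor of `(H,w)` is weakly irreducible: the associated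
digraph `D(A)` is strongly connected on the vertex set of `H`. -/
def WeaklyIrreducible (H : WHypergraph V) (wv : V → ℂ) (we : Finset V → ℂ)
    (k : ℕ) : Prop :=
  ∀ a ∈ H.verts, ∀ b ∈ H.verts, Relation.ReflTransGen (H.TensorArc wv we k) a b

end WHypergraph

/-- Let `(H,w)` be a weighted `k`-uniform hypergraph with `k ≥ 3`
and let `e` be an edge of `H` containing at least two vertices of degree one.
If `lam` is an eigenvalue of `A(H∖e, w)` then `lam` is an eigenvalue of `A(H,w)`. -/
theorem eigenvalue_of_delEdge_is_eigenvalue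
    {V : Type*} [Fintype V] [DecidableEq V]
    (H : WHypergraph V) (k : ℕ) (hk : 3 ≤ k) (hH : H.IsUniform k)
    (wv : V → ℂ) (we : Finset V → ℂ)
    (e : Finset V) (he : e ∈ H.edges)
    (h2 : 2 ≤ (e.filter fun v => H.degree v = 1).card)
    (lam : ℂ) (hlam : (H.delEdge e).IsEigenvalue wv we k lam) :
    H.IsEigenvalue wv we k lam := by
  classical
  obtain ⟨x, ⟨v0, hv0, hx0⟩, heig⟩ := hlam
  set R : Finset V := e.filter (fun v => H.degree v = 1) with hR
  have hdeg1 : ∀ u ∈ R, ∀ f ∈ H.edges, u ∈ f → f = e := by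
    intro u hu f hf huf
    have hu' := Finset.mem_filter.mp hu
    obtain ⟨a, ha⟩ := Finset.card_eq_one.mp hu'.2
    have hea : e = a := by
      have : e ∈ H.edges.filter fun g => u ∈ g := Finset.mem_filter.mpr ⟨he, hu'.1⟩
      simpa [ha] using this
    have hfa : f = a := by
      have : f ∈ H.edges.filter fun g => u ∈ g := Finset.mem_filter.mpr ⟨hf, huf⟩
      simpa [ha] using this
    rw [hfa, hea]
  have hnotR : ∀ u f, f ∈ H.edges → f ≠ e → u ∈ f → u ∉ R := by
    intro u f hf hfe huf hu
    exact hfe (hdeg1 u hu f hf huf)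
  obtain ⟨u1, hu1, u2, hu2, h12⟩ := Finset.one_lt_card.mp h2
  set x' : V → ℂ := fun u => if u ∈ R then 0 else x u with hxdef
  have hx'R : ∀ u, u ∈ R → x' u = 0 := fun u hu => if_pos hu
  have hx'n : ∀ u, u ∉ R → x' u = x u := fun u hu => if_neg hu
  have hVerts : (H.delEdge e).verts = H.verts \ R := rfl
  have hEdges : (H.delEdge e).edges = H.edges.erase e := rfl
  have hv0' : v0 ∈ H.verts ∧ v0 ∉ R := Finset.mem_sdiff.mp (hVerts ▸ hv0)
  refine ⟨x', ⟨v0, hv0'.1, by rw [hx'n v0 hv0'.2]; exact hx0⟩, ?_⟩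
  intro v hv
  have hkpos : k - 1 ≠ 0 := by omega
  have hi0 : (0 : Fin (k - 1 + 1)) ≠ 0 → False := fun h => h rfl
  by_cases hvR : v ∈ R
  · -- v is a removed vertex: both sides are zero
    rw [hx'R v hvR, zero_pow hkpos, mul_zero]
    refine Finset.sum_eq_zero fun t _ => ?_
    simp only [WHypergraph.adjEntry]
    split_ifs with h1 h2'
    · -- diagonal entry: product contains x' v = 0
      refine mul_eq_zero_of_right _ ?_
      refine Finset.prod_eq_zero (Finset.mem_univ (⟨0, Nat.pos_of_ne_zero hkpos⟩ : Fin (k - 1))) ?_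
      have ht : t ⟨0, Nat.pos_of_ne_zero hkpos⟩ = v := by
        have := h1.1 (Fin.succ ⟨0, Nat.pos_of_ne_zero hkpos⟩)
        rw [Fin.cons_succ, Fin.cons_zero] at this; exact this
      rw [ht]; exact hx'R v hvR
    · -- edge entry: the edge must be e, which contains another removed vertex
      refine mul_eq_zero_of_right _ ?_
      have hvim : v ∈ Finset.univ.image (Fin.cons v t) :=
        Finset.mem_image.mpr ⟨0, Finset.mem_univ _, Fin.cons_zero _ _⟩
      have hfe : Finset.univ.image (Fin.cons v t) = e :=
        hdeg1 v hvR _ h2'.2 hvim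
      obtain ⟨u', hu'R, hu'v⟩ : ∃ u', u' ∈ R ∧ u' ≠ v := by
        by_cases h : u1 = v
        · exact ⟨u2, hu2, fun hh => h12 (h.trans hh.symm) ⟩
        · exact ⟨u1, hu1, h⟩
      have hu'e : u' ∈ Finset.univ.image (Fin.cons v t) := by
        rw [hfe]; exact (Finset.mem_filter.mp hu'R).1
      obtain ⟨i, -, hi⟩ := Finset.mem_image.mp hu'e
      rcases Fin.eq_zero_or_eq_succ i with rfl | ⟨j, rfl⟩
      · have : v = u' := by simpa using hi
        exact absurd this.symm hu'v
      · refine Finset.prod_eq_zero (Finset.mem_univ j) ?_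
        rw [Fin.cons_succ] at hi
        rw [hi]; exact hx'R u' hu'R
    · exact zero_mul _
  · -- v survives: use the eigen-equation for the deleted graph
    have hv' : v ∈ (H.delEdge e).verts := by
      rw [hVerts]; exact Finset.mem_sdiff.mpr ⟨hv, hvR⟩
    have heq := heig v hv'
    rw [hx'n v hvR, ← heq]
    refine Finset.sum_congr rfl fun t _ => ?_
    simp only [WHypergraph.adjEntry]
    by_cases hd : ∀ i : Fin (k - 1 + 1), (Fin.cons v t : Fin (k - 1 + 1) → V) i = (Fin.cons v t : Fin (k - 1 + 1) → V) 0
    · rw [if_pos ⟨hd, by rw [Fin.cons_zero]; exact hv⟩,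
        if_pos ⟨hd, by rw [Fin.cons_zero]; exact hv'⟩]
      congr 1
      refine Finset.prod_congr rfl fun i _ => ?_
      have ht : t i = v := by
        have := hd (Fin.succ i); simpa [Fin.cons_succ, Fin.cons_zero] using this
      rw [ht, hx'n v hvR]
    · have hnd1 : ¬((∀ i : Fin (k - 1 + 1), (Fin.cons v t : Fin (k - 1 + 1) → V) i
          = (Fin.cons v t : Fin (k - 1 + 1) → V) 0)
          ∧ (Fin.cons v t : Fin (k - 1 + 1) → V) 0 ∈ H.verts) := fun h => hd h.1
      have hnd2 : ¬((∀ i : Fin (k - 1 + 1), (Fin.cons v t : Fin (k - 1 + 1) → V) i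
          = (Fin.cons v t : Fin (k - 1 + 1) → V) 0)
          ∧ (Fin.cons v t : Fin (k - 1 + 1) → V) 0 ∈ (H.delEdge e).verts) := fun h => hd h.1
      rw [if_neg hnd1, if_neg hnd2]
      by_cases hie : Function.Injective (Fin.cons v t) ∧
          Finset.univ.image (Fin.cons v t) ∈ H.edges
      · by_cases hfe : Finset.univ.image (Fin.cons v t) = e
        · rw [if_pos hie, if_neg (fun h => by
            have := h.2
            rw [hEdges, hfe] at this
            exact (Finset.notMem_erase e H.edges) this)]
          rw [zero_mul]
          refine mul_eq_zero_of_right _ ?_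
          have hu1v : u1 ≠ v := fun h => hvR (h ▸ hu1)
          have hu1e : u1 ∈ Finset.univ.image (Fin.cons v t) := by
            rw [hfe]; exact (Finset.mem_filter.mp hu1).1
          obtain ⟨i, -, hi⟩ := Finset.mem_image.mp hu1e
          rcases Fin.eq_zero_or_eq_succ i with rfl | ⟨j, rfl⟩
          · have : v = u1 := by simpa using hi
            exact absurd this.symm hu1v
          · refine Finset.prod_eq_zero (Finset.mem_univ j) ?_
            rw [Fin.cons_succ] at hi
            rw [hi]; exact hx'R u1 hu1
        · rw [if_pos hie, if_pos ⟨hie.1, by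
            rw [hEdges]; exact Finset.mem_erase.mpr ⟨hfe, hie.2⟩⟩]
          congr 1
          refine Finset.prod_congr rfl fun i _ => ?_
          have hti : t i ∈ Finset.univ.image (Fin.cons v t) :=
            Finset.mem_image.mpr ⟨Fin.succ i, Finset.mem_univ _, Fin.cons_succ _ _ _⟩
          exact hx'n _ (hnotR _ _ hie.2 hfe hti)
      · rw [if_neg hie, if_neg (fun h => hie ⟨h.1, by
          have := h.2; rw [hEdges] at this
          exact Finset.mem_of_mem_erase this⟩)]
        simp
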